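/- Let A ⊆ ℝ^d with 0 < r < reach A, let a, b ∈ A with 0 < |b−a| < r, and suppose Tan(A,a) is one-dimensional, i.e. span(Tan(A,a)) is a line L. Let π be the orthogonal projection onto the affine line a + L. Then π(b) − a ∈ Tan(A,a), |π(b) − a| ≥ (√3/2)|b−a|, and |π(b) − a| ≥ √3·|b − π(b)|. -/

import Mathlib

open Metric Set MeasureTheory
open scoped RealInnerProductSpace ENNReal NNReal

noncomputable section

abbrev Euc (d : ℕ) := EuclideanSpace ℝ (Fin d)

/-- Points of the ambient space having a unique nearest point in `A`. -/
def unp {d : ℕ} (A : Set (Euc d)) : Set (Euc d) :=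
  {x | ∃! a, a ∈ A ∧ dist x a = Metric.infDist x A}

/-- Federer's local reach `reach (A, a)`. -/
def reachAt {d : ℕ} (A : Set (Euc d)) (a : Euc d) : ℝ≥0∞ :=
  sSup {r : ℝ≥0∞ | ∀ x : Euc d, edist x a < r → x ∈ unp A}

/-- Federer's reach of a set. -/
def reach {d : ℕ} (A : Set (Euc d)) : ℝ≥0∞ := ⨅ a ∈ A, reachAt A a

/-- The tangent cone of `A` at `a`: `u` is a tangent vector iff `u = 0` or `u` is a limit of
`r i • (x i - a)` with `x i ∈ A \ {a}`, `x i → a`, `r i > 0`. -/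
def tanCone {d : ℕ} (A : Set (Euc d)) (a : Euc d) : Set (Euc d) :=
  {u | u = 0 ∨ ∃ (x : ℕ → Euc d) (r : ℕ → ℝ),
    (∀ n, x n ∈ A ∧ x n ≠ a) ∧
    Filter.Tendsto x Filter.atTop (nhds a) ∧
    (∀ n, 0 < r n) ∧
    Filter.Tendsto (fun n => r n • (x n - a)) Filter.atTop (nhds u)}

/-- The dimension of the tangent cone of `A` at `a`. -/
def tanDim {d : ℕ} (A : Set (Euc d)) (a : Euc d) : ℕ :=
  Module.finrank ℝ (Submodule.span ℝ (tanCone A a))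

/-- The set of points of `A` at which the tangent cone has dimension `k`. -/
def Tk {d : ℕ} (A : Set (Euc d)) (k : ℕ) : Set (Euc d) :=
  {x | x ∈ A ∧ tanDim A x = k}

/-- Whitney's fullness `Θ(σ) = vol_k(σ) / (diam σ)^k` of a set. -/
def fullness {d : ℕ} (k : ℕ) (s : Set (Euc d)) : ℝ :=
  (μH[(k : ℝ)] s).toReal / (Metric.diam s) ^ k

/-- The metric `ρ_k` on the Grassmannian of subspaces of `ℝ^d`. -/
def grassDist {d : ℕ} (U V : Submodule ℝ (Euc d)) : ℝ :=
  max (sSup ((fun u => Metric.infDist u (V : Set (Euc d))) '' {u | u ∈ U ∧ ‖u‖ = 1}))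
      (sSup ((fun v => Metric.infDist v (U : Set (Euc d))) '' {v | v ∈ V ∧ ‖v‖ = 1}))

namespace FedererAux
open Classical Filter Topology
set_option maxHeartbeats 1000000

variable {d : ℕ} {A : Set (Euc d)} {r : ℝ}

/-- the metric projection (foot map) -/
noncomputable def ft (A : Set (Euc d)) (x : Euc d) : Euc d :=
  if h : x ∈ unp A then h.choose else x

lemma ft_mem {x : Euc d} (h : x ∈ unp A) : ft A x ∈ A := by
  classical
  rw [ft, dif_pos h]; exact h.choose_spec.1.1

lemma ft_dist {x : Euc d} (h : x ∈ unp A) : dist x (ft A x) = infDist x A := by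
  classical
  rw [ft, dif_pos h]; exact h.choose_spec.1.2

lemma ft_unique {x q : Euc d} (h : x ∈ unp A) (hq : q ∈ A)
    (hdq : dist x q = infDist x A) : q = ft A x := by
  classical
  rw [ft, dif_pos h]; exact h.choose_spec.2 q ⟨hq, hdq⟩

lemma ft_of_mem {x : Euc d} (h : x ∈ unp A) (hx : x ∈ A) : ft A x = x :=
  (ft_unique h hx (by simp [Metric.infDist_zero_of_mem hx])).symm

/-- every point of the `r`-tube has a unique nearest point -/
lemma unp_of_reach (hrA : ENNReal.ofReal r < reach A) (hA : A.Nonempty)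
    {x : Euc d} (hx : infDist x A < r) : x ∈ unp A := by
  obtain ⟨a', ha', hda'⟩ := (Metric.infDist_lt_iff hA).mp hx
  have h1 : ENNReal.ofReal r < reachAt A a' := lt_of_lt_of_le hrA (biInf_le _ ha')
  rw [reachAt, lt_sSup_iff] at h1
  obtain ⟨s, hs, hrs⟩ := h1
  exact hs x (lt_trans (by rw [edist_dist]; exact ENNReal.ofReal_lt_ofReal_iff_of_nonneg dist_nonneg |>.mpr hda') hrs)

lemma mem_of_mem_closure (hU : ∀ y : Euc d, infDist y A < r → y ∈ unp A) (hr : 0 < r)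
    {x : Euc d} (hx : x ∈ closure A) : x ∈ A := by
  have h0 : infDist x A = 0 := by
    rw [← Metric.infDist_closure]; exact Metric.infDist_zero_of_mem hx
  obtain ⟨q, ⟨hqA, hqd⟩, -⟩ := hU x (by rw [h0]; exact hr)
  rw [h0] at hqd
  rwa [show x = q from by rwa [← dist_eq_zero]]

/-- continuity of the foot map on the tube -/
lemma ft_continuousAt (hU : ∀ y : Euc d, infDist y A < r → y ∈ unp A) (hr : 0 < r)
    {y : Euc d} (hy : infDist y A < r) : ContinuousAt (ft A) y := by
  rw [Metric.continuousAt_iff]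
  by_contra hcon
  push_neg at hcon
  obtain ⟨ε, hε, H⟩ := hcon
  set δ0 := min ((r - infDist y A) / 2) 1 with hδ0
  have hδ0pos : 0 < δ0 := lt_min (by linarith) one_pos
  choose x hx1 hx2 using fun n : ℕ => H (min δ0 (1 / (n + 1))) (lt_min hδ0pos (by positivity))
  have hxy : Tendsto x atTop (nhds y) := by
    rw [tendsto_iff_dist_tendsto_zero]
    apply squeeze_zero (fun n => dist_nonneg) (fun n => (hx1 n).le.trans (min_le_right _ _))
    exact tendsto_one_div_add_atTop_nhds_zero_nat
  have hxU : ∀ n, x n ∈ unp A := by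
    intro n
    apply hU
    calc infDist (x n) A ≤ infDist y A + dist (x n) y := Metric.infDist_le_infDist_add_dist
    _ < infDist y A + (r - infDist y A) / 2 + 0 := by
        have := (hx1 n).trans_le ((min_le_left _ _).trans (min_le_left _ _)); linarith
    _ < r := by linarith
  set f := fun n => ft A (x n) with hf
  have hfb : ∀ n, f n ∈ closedBall y (infDist y A + 2) := by
    intro n
    have h1 : dist (x n) (f n) = infDist (x n) A := ft_dist (hxU n)
    have h2 : infDist (x n) A ≤ infDist y A + dist (x n) y := Metric.infDist_le_infDist_add_dist
    have h3 : dist (x n) y ≤ 1 := ((hx1 n).le.trans ((min_le_left _ _).trans (min_le_right _ _)))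
    have : dist (f n) y ≤ dist (f n) (x n) + dist (x n) y := dist_triangle _ _ _
    rw [dist_comm (f n) (x n), h1] at this
    simp only [mem_closedBall]
    linarith
  obtain ⟨q, -, φ, hφ, hq⟩ := (isCompact_closedBall y _).tendsto_subseq hfb
  have hqA : q ∈ A := by
    apply mem_of_mem_closure hU hr
    exact mem_closure_of_tendsto hq (Filter.Eventually.of_forall fun n => ft_mem (hxU (φ n)))
  have hxyφ : Tendsto (x ∘ φ) atTop (nhds y) := hxy.comp hφ.tendsto_atTop
  have hdq : dist y q = infDist y A := by
    have h1 : Tendsto (fun n => dist (x (φ n)) (f (φ n))) atTop (nhds (dist y q)) :=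
      Tendsto.dist hxyφ hq
    have h2 : Tendsto (fun n => dist (x (φ n)) (f (φ n))) atTop (nhds (infDist y A)) := by
      have : ∀ n, dist (x (φ n)) (f (φ n)) = infDist (x (φ n)) A := fun n => ft_dist (hxU (φ n))
      simp only [this]
      exact ((Metric.continuous_infDist_pt A).continuousAt.tendsto.comp hxyφ)
    exact tendsto_nhds_unique h1 h2
  have hqft : q = ft A y := ft_unique (hU y hy) hqA hdq
  have hlim : Tendsto (fun n => dist (f (φ n)) (ft A y)) atTop (nhds (dist q (ft A y))) :=
    Tendsto.dist hq tendsto_const_nhds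
  have : ε ≤ dist q (ft A y) :=
    le_of_tendsto_of_tendsto' tendsto_const_nhds hlim (fun n => hx2 (φ n))
  rw [← hqft, dist_self] at this
  linarith


/-- the unit "gradient" field of the distance function -/
noncomputable def grd (A : Set (Euc d)) (y : Euc d) : Euc d :=
  (infDist y A)⁻¹ • (y - ft A y)

lemma grd_norm {y : Euc d} (hy : y ∈ unp A) (h0 : 0 < infDist y A) : ‖grd A y‖ = 1 := by
  rw [grd, norm_smul, ← dist_eq_norm, ft_dist hy, Real.norm_eq_abs, abs_inv, abs_of_pos h0,
    inv_mul_cancel₀ h0.ne']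

lemma hasFDerivAt_infDist_sq (hU : ∀ y : Euc d, infDist y A < r → y ∈ unp A) (hr : 0 < r)
    {y : Euc d} (hy : infDist y A < r) :
    HasFDerivAt (fun x => infDist x A ^ 2) (innerSL ℝ ((2:ℝ) • (y - ft A y))) y := by
  rw [hasFDerivAt_iff_isLittleO_nhds_zero, Asymptotics.isLittleO_iff]
  intro c hc
  have h1 : ∀ᶠ h : Euc d in nhds 0, ‖h‖ ≤ c / 2 := by
    filter_upwards [Metric.closedBall_mem_nhds (0 : Euc d) (by positivity : (0:ℝ) < c / 2)] with h hh
    rwa [Metric.mem_closedBall, dist_zero_right] at hh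
  have h2 : ∀ᶠ h : Euc d in nhds 0, infDist (y + h) A < r := by
    have hcont : ContinuousAt (fun h : Euc d => infDist (y + h) A) 0 :=
      ((Metric.continuous_infDist_pt A).comp (continuous_const.add continuous_id)).continuousAt
    have := hcont.eventually_lt continuousAt_const (by simpa using hy)
    simpa using this
  have h3 : ∀ᶠ h : Euc d in nhds 0, ‖ft A (y + h) - ft A y‖ ≤ c / 4 := by
    have hadd : Filter.Tendsto (fun h : Euc d => y + h) (nhds 0) (nhds y) := by
      simpa using (continuous_add_left y).tendsto (0 : Euc d)
    have hft : Filter.Tendsto (fun h : Euc d => ft A (y + h)) (nhds 0) (nhds (ft A y)) :=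
      (ft_continuousAt hU hr hy).tendsto.comp hadd
    have hev : ∀ᶠ h : Euc d in nhds 0, ft A (y + h) ∈ Metric.closedBall (ft A y) (c/4) :=
      hft.eventually_mem (Metric.closedBall_mem_nhds _ (by positivity))
    filter_upwards [hev] with h hh
    rw [Metric.mem_closedBall, dist_eq_norm] at hh
    simpa using hh
  filter_upwards [h1, h2, h3] with h hh1 hh2 hh3
  set D := infDist y A with hD
  set p := ft A y with hp
  have hyU := hU y hy
  have hpd : ‖y - p‖ = D := by rw [← dist_eq_norm]; exact ft_dist hyU
  set q := ft A (y + h) with hq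
  have hqU := hU _ hh2
  have hqd : ‖y + h - q‖ = infDist (y + h) A := by rw [← dist_eq_norm]; exact ft_dist hqU
  have hqA : q ∈ A := ft_mem hqU
  have hpA : p ∈ A := ft_mem hyU
  have key₁ : infDist (y + h) A ^ 2 ≤ D ^ 2 + 2 * ⟪y - p, h⟫ + ‖h‖ ^ 2 := by
    have hle : infDist (y + h) A ≤ ‖(y - p) + h‖ := by
      have := Metric.infDist_le_dist_of_mem (x := y + h) hpA
      rwa [dist_eq_norm, show y + h - p = (y - p) + h by abel] at this
    calc infDist (y + h) A ^ 2 ≤ ‖(y - p) + h‖ ^ 2 := by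
          apply pow_le_pow_left₀ Metric.infDist_nonneg hle
      _ = D ^ 2 + 2 * ⟪y - p, h⟫ + ‖h‖ ^ 2 := by rw [norm_add_sq_real, hpd]
  have key₂ : D ^ 2 + 2 * ⟪y - p, h⟫ + 2 * ⟪p - q, h⟫ + ‖h‖ ^ 2 ≤ infDist (y + h) A ^ 2 := by
    have h1 : ‖(y - q) + h‖ ^ 2 = ‖y - q‖ ^ 2 + 2 * ⟪y - q, h⟫ + ‖h‖ ^ 2 := norm_add_sq_real _ _
    have h2 : D ≤ ‖y - q‖ := by
      rw [← dist_eq_norm]; exact Metric.infDist_le_dist_of_mem hqA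
    have h3 : (y - q) + h = y + h - q := by abel
    have h4 : ⟪y - q, h⟫ = ⟪y - p, h⟫ + ⟪p - q, h⟫ := by
      rw [← inner_add_left]; norm_num
    have h5 : infDist (y + h) A ^ 2 = ‖y - q‖ ^ 2 + 2 * ⟪y - q, h⟫ + ‖h‖ ^ 2 := by
      rw [← hqd, ← h3, h1]
    nlinarith [Metric.infDist_nonneg (x := y) (s := A), h5, h4, h2]
  have habs : |⟪p - q, h⟫| ≤ (c/4) * ‖h‖ := by
    calc |⟪p - q, h⟫| ≤ ‖p - q‖ * ‖h‖ := abs_real_inner_le_norm _ _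
      _ ≤ (c/4) * ‖h‖ := by
          apply mul_le_mul_of_nonneg_right _ (norm_nonneg _)
          rw [show p - q = -(q - p) by abel, norm_neg]
          exact hh3
  have hinner : (innerSL ℝ ((2:ℝ) • (y - p))) h = 2 * ⟪y - p, h⟫ := by
    rw [innerSL_apply_apply, real_inner_smul_left]
  have hplow : -(c / 4 * ‖h‖) ≤ ⟪p - q, h⟫ := (abs_le.mp habs).1
  rw [Real.norm_eq_abs, abs_le]
  constructor
  · simp only [hinner]
    nlinarith [key₂, hplow, sq_nonneg ‖h‖, mul_nonneg hc.le (norm_nonneg h)]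
  · simp only [hinner]
    nlinarith [key₁, mul_nonneg hc.le (norm_nonneg h),
      mul_le_mul_of_nonneg_right hh1 (norm_nonneg h)]

lemma hasFDerivAt_infDist (hU : ∀ y : Euc d, infDist y A < r → y ∈ unp A) (hr : 0 < r)
    {y : Euc d} (h0 : 0 < infDist y A) (hy : infDist y A < r) :
    HasFDerivAt (fun x => infDist x A) (innerSL ℝ (grd A y)) y := by
  have hsq := hasFDerivAt_infDist_sq hU hr hy
  have hs : HasDerivAt Real.sqrt (1 / (2 * Real.sqrt (infDist y A ^ 2))) (infDist y A ^ 2) :=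
    Real.hasDerivAt_sqrt (by positivity)
  have hcomp := hs.comp_hasFDerivAt y hsq
  have hfun : (Real.sqrt ∘ fun x => infDist x A ^ 2) = fun x => infDist x A := by
    funext x; simp [Real.sqrt_sq Metric.infDist_nonneg]
  rw [hfun] at hcomp
  refine hcomp.congr_fderiv (ContinuousLinearMap.ext fun w => ?_)
  rw [ContinuousLinearMap.smul_apply, innerSL_apply_apply, innerSL_apply_apply, grd,
    real_inner_smul_left, real_inner_smul_left, Real.sqrt_sq h0.le, smul_eq_mul]
  field_simp


open Filter in
lemma euler_key (hU : ∀ y : Euc d, infDist y A < r → y ∈ unp A) (hr : 0 < r)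
    {x₀ : Euc d} (h0 : 0 < infDist x₀ A) {T : ℝ}
    (hT1 : infDist x₀ A ≤ T) (hT2 : T < r) :
    ∀ η > 0, ∃ z : Euc d, dist z x₀ ≤ T - infDist x₀ A ∧ T - η ≤ infDist z A := by
  intro η hη
  set t₀ := infDist x₀ A with ht₀
  set L := T - t₀ with hLdef
  have hL0 : 0 ≤ L := by simp only [hLdef]; linarith
  set ε := min 1 (Real.sqrt (η / (L + 1))) with hε
  have hε0 : 0 < ε := lt_min one_pos (Real.sqrt_pos.mpr (by positivity))
  have hε1 : ε ≤ 1 := min_le_left _ _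
  have hεsq : L * (ε ^ 2 / 2) ≤ η / 2 := by
    have h1 : ε ^ 2 ≤ η / (L + 1) := by
      have h2 := min_le_right 1 (Real.sqrt (η / (L + 1)))
      have h3 : Real.sqrt (η / (L + 1)) ^ 2 = η / (L + 1) :=
        Real.sq_sqrt (by positivity)
      nlinarith [Real.sqrt_nonneg (η / (L + 1)), hε0.le]
    have h4 : L * (η / (L + 1)) ≤ η := by
      rw [mul_div_assoc']
      rw [div_le_iff₀ (by positivity)]
      nlinarith
    nlinarith
  set c := 1 - ε ^ 2 / 2 with hc
  have hc2 : (1:ℝ)/2 ≤ c := by simp only [hc]; nlinarith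
  have hcle : c ≤ 1 := by simp only [hc]; nlinarith [sq_nonneg ε]
  -- the compact set on which everything happens
  set K := Metric.closedBall x₀ L ∩ {x : Euc d | t₀ / 2 ≤ infDist x A} with hK
  have hKcpt : IsCompact K := (isCompact_closedBall _ _).inter_right
    (isClosed_le continuous_const (Metric.continuous_infDist_pt A))
  have hKprop : ∀ x ∈ K, 0 < infDist x A ∧ infDist x A < r := by
    intro x hx
    obtain ⟨hx1, hx2⟩ := hx
    rw [Metric.mem_closedBall] at hx1
    refine ⟨lt_of_lt_of_le (by linarith) hx2, ?_⟩
    calc infDist x A ≤ infDist x₀ A + dist x x₀ := Metric.infDist_le_infDist_add_dist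
      _ ≤ t₀ + L := by rw [← ht₀]; linarith
      _ < r := by simp only [hLdef]; linarith
  have hVcont : ContinuousOn (grd A) K := by
    intro x hx
    obtain ⟨hx0, hxr⟩ := hKprop x hx
    apply ContinuousAt.continuousWithinAt
    show ContinuousAt ((fun x => (infDist x A)⁻¹) • (fun x => x - ft A x)) x
    apply ContinuousAt.smul
    · exact ((Metric.continuous_infDist_pt A).continuousAt).inv₀ hx0.ne'
    · exact continuousAt_id.sub (ft_continuousAt hU hr hxr)
  have hUC := hKcpt.uniformContinuousOn_of_continuous hVcont
  rw [Metric.uniformContinuousOn_iff] at hUC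
  obtain ⟨δ, hδpos, hδ⟩ := hUC ε hε0
  -- step size
  set m := min δ (t₀ / 2) with hm
  have hmpos : 0 < m := lt_min hδpos (by linarith)
  obtain ⟨n, hn⟩ := exists_nat_gt (L / m)
  have hnpos : 0 < (n:ℝ) := lt_of_le_of_lt (div_nonneg hL0 hmpos.le) hn
  set h := L / n with hh
  have hh0 : 0 ≤ h := div_nonneg hL0 hnpos.le
  have hhm : h < m := by
    have h1 : L / m * m < ↑n * m := mul_lt_mul_of_pos_right hn hmpos
    rw [div_mul_cancel₀ _ hmpos.ne'] at h1
    rw [hh, div_lt_iff₀ hnpos]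
    nlinarith [h1]
  have hhδ : h < δ := lt_of_lt_of_le hhm (min_le_left _ _)
  have hht₀ : h ≤ t₀ / 2 := le_of_lt (lt_of_lt_of_le hhm (min_le_right _ _))
  have hnh : (n:ℝ) * h = L := by rw [hh]; field_simp
  -- the one-step estimate
  have step : ∀ w : Euc d, dist w x₀ ≤ L - h → t₀ ≤ infDist w A →
      dist (w + h • grd A w) w ≤ h ∧
      infDist w A + h * c ≤ infDist (w + h • grd A w) A := by
    intro w hw1 hw2
    have hwub : infDist w A < r := by
      calc infDist w A ≤ infDist x₀ A + dist w x₀ := Metric.infDist_le_infDist_add_dist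
        _ ≤ t₀ + L := by rw [← ht₀]; linarith
        _ < r := by simp only [hLdef]; linarith
    have hwU : w ∈ unp A := hU w hwub
    have hw0 : 0 < infDist w A := lt_of_lt_of_le h0 hw2
    have hgn : ‖grd A w‖ = 1 := grd_norm hwU hw0
    have hdist1 : dist (w + h • grd A w) w ≤ h := by
      rw [dist_eq_norm, add_sub_cancel_left, norm_smul, hgn, Real.norm_eq_abs,
        abs_of_nonneg hh0, mul_one]
    refine ⟨hdist1, ?_⟩
    -- membership of segment points in K
    have hmem : ∀ σ ∈ Set.Icc (0:ℝ) h, w + σ • grd A w ∈ K := by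
      intro σ hσ
      obtain ⟨hσ0, hσh⟩ := hσ
      constructor
      · rw [Metric.mem_closedBall]
        calc dist (w + σ • grd A w) x₀ ≤ dist (w + σ • grd A w) w + dist w x₀ :=
            dist_triangle _ _ _
          _ ≤ σ + (L - h) := by
              rw [dist_eq_norm, add_sub_cancel_left, norm_smul, hgn, Real.norm_eq_abs,
                abs_of_nonneg hσ0, mul_one]
              linarith
          _ ≤ L := by linarith
      · simp only [Set.mem_setOf_eq]
        have : infDist w A ≤ infDist (w + σ • grd A w) A + dist w (w + σ • grd A w) :=
          Metric.infDist_le_infDist_add_dist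
        rw [dist_comm w, dist_eq_norm, add_sub_cancel_left, norm_smul, hgn, Real.norm_eq_abs,
          abs_of_nonneg hσ0, mul_one] at this
        linarith
    -- the derivative of the distance along the segment
    set g := fun σ : ℝ => infDist (w + σ • grd A w) A - σ * c with hg
    have hderiv : ∀ σ ∈ Set.Icc (0:ℝ) h,
        HasDerivAt g (⟪grd A (w + σ • grd A w), grd A w⟫ - c) σ := by
      intro σ hσ
      have hmemσ := hmem σ hσ
      obtain ⟨hp0, hpr⟩ := hKprop _ hmemσ
      have hF := hasFDerivAt_infDist hU hr hp0 hpr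
      have hcurve : HasDerivAt (fun σ : ℝ => w + σ • grd A w) (grd A w) σ := by
        simpa using ((hasDerivAt_id σ).smul_const (grd A w)).const_add w
      have hcomp := hF.comp_hasDerivAt σ hcurve
      exact hcomp.sub (hasDerivAt_mul_const (c := c) (x := σ))
    -- derivative is nonnegative
    have hnonneg : ∀ σ ∈ Set.Icc (0:ℝ) h, 0 ≤ ⟪grd A (w + σ • grd A w), grd A w⟫ - c := by
      intro σ hσ
      obtain ⟨hσ0, hσh⟩ := hσ
      have hmemσ := hmem σ ⟨hσ0, hσh⟩
      have hmemw : w ∈ K := by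
        constructor
        · rw [Metric.mem_closedBall]; linarith
        · simp only [Set.mem_setOf_eq]; linarith
      have hclose : dist (w + σ • grd A w) w < δ := by
        rw [dist_eq_norm, add_sub_cancel_left, norm_smul, hgn, Real.norm_eq_abs,
          abs_of_nonneg hσ0, mul_one]
        linarith
      have hgr := hδ _ hmemσ _ hmemw hclose
      rw [dist_eq_norm] at hgr
      obtain ⟨hp0, hpr⟩ := hKprop _ hmemσ
      have hgσn : ‖grd A (w + σ • grd A w)‖ = 1 := grd_norm (hU _ hpr) hp0
      have hexp : ‖grd A (w + σ • grd A w) - grd A w‖ ^ 2 =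
          2 - 2 * ⟪grd A (w + σ • grd A w), grd A w⟫ := by
        rw [norm_sub_sq_real, hgσn, hgn]; ring
      have hsq : ‖grd A (w + σ • grd A w) - grd A w‖ ^ 2 ≤ ε ^ 2 :=
        pow_le_pow_left₀ (norm_nonneg _) hgr.le 2
      rw [hexp] at hsq
      rw [hc]
      linarith
    -- monotonicity
    have hmono : MonotoneOn g (Set.Icc (0:ℝ) h) := by
      apply monotoneOn_of_deriv_nonneg (convex_Icc 0 h)
      · apply Continuous.continuousOn
        apply Continuous.sub
        · exact (Metric.continuous_infDist_pt A).comp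
            (continuous_const.add (continuous_id.smul continuous_const))
        · exact continuous_id.mul continuous_const
      · intro σ hσ
        rw [interior_Icc] at hσ
        exact (hderiv σ (Set.mem_Icc_of_Ioo hσ)).differentiableAt.differentiableWithinAt
      · intro σ hσ
        rw [interior_Icc] at hσ
        rw [(hderiv σ (Set.mem_Icc_of_Ioo hσ)).deriv]
        exact hnonneg σ (Set.mem_Icc_of_Ioo hσ)
    have hgle : g 0 ≤ g h := hmono (Set.left_mem_Icc.mpr hh0) (Set.right_mem_Icc.mpr hh0) hh0
    simp only [hg, zero_smul, add_zero, zero_mul, sub_zero] at hgle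
    linarith
  -- the Euler iteration
  set z := fun k : ℕ => (fun w : Euc d => w + h • grd A w)^[k] x₀ with hz
  have hzsucc : ∀ k, z (k + 1) = z k + h • grd A (z k) := fun k =>
    Function.iterate_succ_apply' _ _ _
  have main : ∀ k : ℕ, k ≤ n → dist (z k) x₀ ≤ k * h ∧ t₀ + (k * h) * c ≤ infDist (z k) A := by
    intro k
    induction k with
    | zero => intro _; simp [hz, ht₀]
    | succ k ih =>
      intro hk1
      obtain ⟨ih1, ih2⟩ := ih (Nat.le_of_succ_le hk1)
      have hkn : (k:ℝ) + 1 ≤ (n:ℝ) := by exact_mod_cast hk1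
      have hk' : (k:ℝ) * h ≤ L - h := by nlinarith
      have hw2 : t₀ ≤ infDist (z k) A := by nlinarith [mul_nonneg (mul_nonneg (Nat.cast_nonneg k) hh0) (le_trans (by norm_num) hc2)]
      obtain ⟨hs1, hs2⟩ := step (z k) (le_trans ih1 hk') hw2
      constructor
      · rw [hzsucc]
        calc dist (z k + h • grd A (z k)) x₀ ≤
            dist (z k + h • grd A (z k)) (z k) + dist (z k) x₀ := dist_triangle _ _ _
          _ ≤ h + k * h := by linarith
          _ = (k + 1 : ℕ) * h := by push_cast; ring
      · rw [hzsucc]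
        calc t₀ + ((k + 1 : ℕ) * h) * c = (t₀ + ((k:ℝ) * h) * c) + h * c := by push_cast; ring
          _ ≤ infDist (z k) A + h * c := by linarith
          _ ≤ _ := hs2
  obtain ⟨m1, m2⟩ := main n le_rfl
  refine ⟨z n, ?_, ?_⟩
  · rwa [hnh] at m1
  · rw [hnh] at m2
    have h5 : L * c = L - L * (ε ^ 2 / 2) := by rw [hc]; ring
    clear_value z h m K c ε L t₀
    linarith only [m2, hεsq, h5, hη, hLdef]


open Filter in
/-- Federer's normal ray extension: a realized normal direction extends to length `T < r`. -/
lemma ray_ext (hU : ∀ y : Euc d, infDist y A < r → y ∈ unp A) (hr : 0 < r)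
    {x₀ p : Euc d} (hp : p ∈ A) (hd : dist x₀ p = infDist x₀ A)
    (h0 : 0 < infDist x₀ A) {T : ℝ} (hT1 : infDist x₀ A ≤ T) (hT2 : T < r) :
    infDist (p + (T / infDist x₀ A) • (x₀ - p)) A = T := by
  have key := euler_key hU hr h0 hT1 hT2
  choose zf hz1 hz2 using fun k : ℕ => key (1 / (k + 1)) (by positivity)
  obtain ⟨zs, hzmem, φ, hφ, hconv⟩ := (isCompact_closedBall x₀ (T - infDist x₀ A)).tendsto_subseq
    (fun k => by simpa [Metric.mem_closedBall] using hz1 k)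
  set t₀ := infDist x₀ A with ht₀
  -- infDist zs A = T
  have hlim1 : Tendsto (fun k => infDist (zf (φ k)) A) atTop (nhds (infDist zs A)) :=
    ((Metric.continuous_infDist_pt A).continuousAt).tendsto.comp hconv
  have hge : T ≤ infDist zs A := by
    have hlow : Tendsto (fun k : ℕ => T - 1 / ((φ k : ℝ) + 1)) atTop (nhds T) := by
      have h1 : Tendsto (fun k : ℕ => 1 / ((k : ℝ) + 1)) atTop (nhds 0) :=
        tendsto_one_div_add_atTop_nhds_zero_nat
      have h2 := h1.comp hφ.tendsto_atTop
      have := tendsto_const_nhds (x := T) (f := atTop (α := ℕ)) |>.sub h2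
      simpa using this
    exact le_of_tendsto_of_tendsto' hlow hlim1 (fun k => hz2 (φ k))
  have hdx : dist zs x₀ ≤ T - t₀ := by simpa [Metric.mem_closedBall] using hzmem
  have hdp : dist zs p ≤ T := by
    calc dist zs p ≤ dist zs x₀ + dist x₀ p := dist_triangle _ _ _
      _ ≤ (T - t₀) + t₀ := by rw [hd]; linarith [hdx]
      _ = T := by ring
  have hinf : infDist zs A = T :=
    le_antisymm (le_trans (Metric.infDist_le_dist_of_mem hp) hdp) hge
  have hdp' : dist zs p = T := le_antisymm hdp (hinf ▸ Metric.infDist_le_dist_of_mem hp)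
  have hdx' : dist zs x₀ = T - t₀ := by
    have hlb : T - t₀ ≤ dist zs x₀ := by
      linarith [hdp', dist_triangle zs x₀ p, hd]
    linarith [hdx, hlb]
  -- collinearity
  set u := zs - x₀ with hu
  set w := x₀ - p with hw
  have hnu : ‖u‖ = T - t₀ := by rw [hu, ← dist_eq_norm]; exact hdx'
  have hnw : ‖w‖ = t₀ := by rw [hw, ← dist_eq_norm]; exact hd
  have hnuw : ‖u + w‖ = T := by
    rw [hu, hw, show zs - x₀ + (x₀ - p) = zs - p by abel, ← dist_eq_norm]
    exact hdp'
  have hinner : ⟪u, w⟫ = (T - t₀) * t₀ := by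
    have hexp : ‖u + w‖ ^ 2 = ‖u‖ ^ 2 + 2 * ⟪u, w⟫ + ‖w‖ ^ 2 := norm_add_sq_real u w
    rw [hnu, hnw, hnuw] at hexp
    nlinarith [hexp]
  have hzero : t₀ • u - (T - t₀) • w = 0 := by
    have hnormsq : ‖t₀ • u - (T - t₀) • w‖ ^ 2 = 0 := by
      rw [norm_sub_sq_real, norm_smul, norm_smul, real_inner_smul_left, real_inner_smul_right,
        hinner, Real.norm_eq_abs, Real.norm_eq_abs, abs_of_pos h0,
        abs_of_nonneg (by linarith : (0:ℝ) ≤ T - t₀), hnu, hnw]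
      ring
    have := pow_eq_zero_iff (n := 2) (by norm_num) |>.mp hnormsq
    exact norm_eq_zero.mp this
  have hzs : zs = x₀ + ((T - t₀) / t₀) • w := by
    have h1 : t₀ • u = (T - t₀) • w := by
      have := sub_eq_zero.mp hzero
      exact this
    have h2 : u = ((T - t₀) / t₀) • w := by
      have h3 := congrArg (fun v : Euc d => (t₀⁻¹ : ℝ) • v) h1
      simp only [← smul_assoc, smul_eq_mul] at h3
      rw [inv_mul_cancel₀ h0.ne', one_smul] at h3
      rw [h3, show t₀⁻¹ * (T - t₀) = (T - t₀) / t₀ by ring]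
    rw [← h2, hu]
    abel
  have hpt : p + (T / t₀) • w = zs := by
    rw [hzs]
    have hcoef : T / t₀ = 1 + (T - t₀) / t₀ := by field_simp; ring
    rw [hcoef, add_smul, one_smul, hw]
    abel
  rw [hpt]
  exact hinf


/-- realized normal inequality with extension to scale `T` -/
lemma normal_ineq (hU : ∀ y : Euc d, infDist y A < r → y ∈ unp A) (hr : 0 < r)
    {x₀ p : Euc d} (hp : p ∈ A) (hd : dist x₀ p = infDist x₀ A)
    (h0 : 0 < infDist x₀ A) {T : ℝ} (hT1 : infDist x₀ A ≤ T) (hT2 : T < r)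
    {q : Euc d} (hq : q ∈ A) :
    ⟪x₀ - p, q - p⟫ ≤ infDist x₀ A * ‖q - p‖ ^ 2 / (2 * T) := by
  have hext := ray_ext hU hr hp hd h0 hT1 hT2
  set t₀ := infDist x₀ A with ht₀
  have hT0 : 0 < T := lt_of_lt_of_le h0 hT1
  set s := T / t₀ with hs
  have hs0 : 0 < s := div_pos hT0 h0
  have h1 : T ≤ dist (p + s • (x₀ - p)) q := hext ▸ Metric.infDist_le_dist_of_mem hq
  rw [dist_eq_norm, show p + s • (x₀ - p) - q = (p - q) + s • (x₀ - p) by abel] at h1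
  have h2 : T ^ 2 ≤ ‖(p - q) + s • (x₀ - p)‖ ^ 2 := pow_le_pow_left₀ hT0.le h1 2
  have h3 : ‖(p - q) + s • (x₀ - p)‖ ^ 2 =
      ‖p - q‖ ^ 2 + 2 * (s * ⟪p - q, x₀ - p⟫) + s ^ 2 * ‖x₀ - p‖ ^ 2 := by
    rw [norm_add_sq_real, real_inner_smul_right, norm_smul, Real.norm_eq_abs,
      abs_of_pos hs0, mul_pow]
  have h4 : ‖x₀ - p‖ = t₀ := by rw [← dist_eq_norm]; exact hd
  have h5 : s * t₀ = T := by rw [hs]; field_simp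
  have h6 : s ^ 2 * ‖x₀ - p‖ ^ 2 = T ^ 2 := by rw [h4, ← mul_pow, h5]
  have h7 : ⟪p - q, x₀ - p⟫ = - ⟪x₀ - p, q - p⟫ := by
    rw [show p - q = -(q - p) by abel, inner_neg_left, real_inner_comm]
  rw [h3, h6, h7] at h2
  have h8 : 2 * s * ⟪x₀ - p, q - p⟫ ≤ ‖p - q‖ ^ 2 := by linarith
  have h9 : ‖p - q‖ = ‖q - p‖ := norm_sub_rev p q
  rw [le_div_iff₀ (by positivity : (0:ℝ) < 2 * T)]
  have h10 : ⟪x₀ - p, q - p⟫ * (2 * T) = (2 * s * ⟪x₀ - p, q - p⟫) * t₀ := by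
    rw [← h5]; ring
  have h11 : ‖p - q‖ ^ 2 * t₀ = t₀ * ‖q - p‖ ^ 2 := by rw [h9]; ring
  rw [h10, ← h11]
  exact mul_le_mul_of_nonneg_right h8 h0.le

open Filter in
/-- the chord construction: a tangent vector close to `b - a` -/
lemma chord_tangent (hU : ∀ y : Euc d, infDist y A < r → y ∈ unp A) (hr : 0 < r)
    {a b : Euc d} (ha : a ∈ A) (hb : b ∈ A) (hab : b ≠ a) (hlt : ‖b - a‖ < r) :
    ∃ w ∈ tanCone A a, ‖(b - a) - w‖ ≤ ‖b - a‖ ^ 2 / (‖b - a‖ + r) := by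
  set v := b - a with hv
  have hv0 : 0 < ‖v‖ := norm_pos_iff.mpr (sub_ne_zero.mpr hab)
  set T := (‖v‖ + r) / 2 with hT
  have hTv : ‖v‖ < T := by rw [hT]; linarith
  have hTr : T < r := by rw [hT]; linarith
  have hT0 : 0 < T := lt_trans hv0 hTv
  -- per-scale chord estimate
  have bound : ∀ t : ℝ, 0 < t → t ≤ 1 / 2 →
      infDist (a + t • v) A ≤ t * (‖v‖ ^ 2 * (1 + 4 * t) / (2 * T)) := by
    intro t ht0 ht12
    set y := a + t • v with hy
    set e := infDist y A with he
    have hya : dist y a = t * ‖v‖ := by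
      rw [hy, dist_eq_norm, add_sub_cancel_left, norm_smul, Real.norm_eq_abs, abs_of_pos ht0]
    have hetv : e ≤ t * ‖v‖ := by
      rw [he, ← hya]; exact Metric.infDist_le_dist_of_mem ha
    have her : e < r := lt_of_le_of_lt hetv (by nlinarith)
    have hyU : y ∈ unp A := hU y her
    set γ := ft A y with hγ
    have hγA : γ ∈ A := ft_mem hyU
    have hγd : dist y γ = e := ft_dist hyU
    rcases eq_or_lt_of_le (Metric.infDist_nonneg : (0:ℝ) ≤ e) with h0 | h0
    · have he0 : e = 0 := by rw [he]; exact h0.symm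
      rw [he0]; positivity
    -- realized normal inequalities at γ toward a and b
    have hTe : e ≤ T := le_trans hetv (by nlinarith)
    have ineqa : ⟪y - γ, a - γ⟫ ≤ e * ‖a - γ‖ ^ 2 / (2 * T) :=
      normal_ineq hU hr hγA hγd h0 hTe hTr ha
    have ineqb : ⟪y - γ, b - γ⟫ ≤ e * ‖b - γ‖ ^ 2 / (2 * T) :=
      normal_ineq hU hr hγA hγd h0 hTe hTr hb
    -- convex decomposition of y - γ
    have hyγ : ‖y - γ‖ = e := by rw [← dist_eq_norm]; exact hγd
    have hiden : y - γ = (1 - t) • (a - γ) + t • (b - γ) := by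
      rw [hy, hv]; module
    have hinner : ∀ u : Euc d, ⟪u, y - γ⟫ = (1 - t) * ⟪u, a - γ⟫ + t * ⟪u, b - γ⟫ := by
      intro u
      rw [hiden, inner_add_right, real_inner_smul_right, real_inner_smul_right]
    have hesq : e ^ 2 = (1 - t) * ⟪y - γ, a - γ⟫ + t * ⟪y - γ, b - γ⟫ := by
      rw [← hinner (y - γ), real_inner_self_eq_norm_sq, ← dist_eq_norm, hγd]
    -- norm bounds
    have hna : ‖a - γ‖ ≤ 2 * (t * ‖v‖) := by
      calc ‖a - γ‖ = ‖(a - y) + (y - γ)‖ := by rw [show a - y + (y - γ) = a - γ by abel]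
        _ ≤ ‖a - y‖ + ‖y - γ‖ := norm_add_le _ _
        _ ≤ t * ‖v‖ + t * ‖v‖ := by
            have hay : ‖a - y‖ = t * ‖v‖ := by rw [← dist_eq_norm, dist_comm]; exact hya
            exact add_le_add hay.le (le_trans hyγ.le hetv)
        _ = 2 * (t * ‖v‖) := by ring
    have hnb : ‖b - γ‖ ≤ ‖v‖ := by
      have hby : ‖b - y‖ = (1 - t) * ‖v‖ := by
        rw [hy, hv, show b - (a + t • (b - a)) = (1 - t) • (b - a) by
          rw [sub_smul, one_smul]; abel, norm_smul, Real.norm_eq_abs,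
          abs_of_nonneg (by linarith)]
      calc ‖b - γ‖ = ‖(b - y) + (y - γ)‖ := by rw [show b - y + (y - γ) = b - γ by abel]
        _ ≤ ‖b - y‖ + ‖y - γ‖ := norm_add_le _ _
        _ ≤ (1 - t) * ‖v‖ + t * ‖v‖ := by
            exact add_le_add hby.le (le_trans hyγ.le hetv)
        _ = ‖v‖ := by ring
    -- combine
    set S := (1 - t) * (2 * (t * ‖v‖)) ^ 2 + t * ‖v‖ ^ 2 with hS
    rw [le_div_iff₀ (by positivity : (0:ℝ) < 2 * T)] at ineqa ineqb
    have hesq2 : e ^ 2 * (2 * T) ≤ e * S := by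
      have h3 : ‖a - γ‖ ^ 2 ≤ (2 * (t * ‖v‖)) ^ 2 := pow_le_pow_left₀ (norm_nonneg _) hna 2
      have h4 : ‖b - γ‖ ^ 2 ≤ ‖v‖ ^ 2 := pow_le_pow_left₀ (norm_nonneg _) hnb 2
      calc e ^ 2 * (2 * T) = (1 - t) * (⟪y - γ, a - γ⟫ * (2 * T)) +
            t * (⟪y - γ, b - γ⟫ * (2 * T)) := by rw [hesq]; ring
        _ ≤ (1 - t) * (e * ‖a - γ‖ ^ 2) + t * (e * ‖b - γ‖ ^ 2) := by
            have g1 := mul_le_mul_of_nonneg_left ineqa (by linarith : (0:ℝ) ≤ 1 - t)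
            have g2 := mul_le_mul_of_nonneg_left ineqb ht0.le
            linarith
        _ ≤ e * S := by
            have g3 : e * ‖a - γ‖ ^ 2 ≤ e * (2 * (t * ‖v‖)) ^ 2 :=
              mul_le_mul_of_nonneg_left h3 h0.le
            have g4 : e * ‖b - γ‖ ^ 2 ≤ e * ‖v‖ ^ 2 := mul_le_mul_of_nonneg_left h4 h0.le
            have g5 := mul_le_mul_of_nonneg_left g3 (by linarith : (0:ℝ) ≤ 1 - t)
            have g6 := mul_le_mul_of_nonneg_left g4 ht0.le
            rw [hS]
            nlinarith [g5, g6]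
    have hfin : e * (2 * T) ≤ S := by
      have h6 : e * (e * (2 * T)) ≤ e * S := by nlinarith [hesq2]
      exact le_of_mul_le_mul_left h6 h0
    have hSle : S ≤ t * (‖v‖ ^ 2 * (1 + 4 * t)) := by
      rw [hS]; nlinarith [sq_nonneg (t * ‖v‖), ht0.le, sq_nonneg ‖v‖]
    rw [show t * (‖v‖ ^ 2 * (1 + 4 * t) / (2 * T)) = t * (‖v‖ ^ 2 * (1 + 4 * t)) / (2 * T) by
      ring, le_div_iff₀ (by positivity : (0:ℝ) < 2 * T)]
    linarith
  -- the sequence of scales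
  set tn : ℕ → ℝ := fun n => 1 / ((n : ℝ) + 2) with htn
  have htnpos : ∀ n, 0 < tn n := fun n => by positivity
  have htn12 : ∀ n, tn n ≤ 1 / 2 := fun n => by
    apply one_div_le_one_div_of_le (by norm_num)
    have : (0:ℝ) ≤ (n : ℝ) := Nat.cast_nonneg n
    linarith
  have htn0 : Filter.Tendsto tn atTop (nhds 0) := by
    apply Filter.Tendsto.div_atTop (tendsto_const_nhds (x := (1:ℝ)))
    exact Filter.tendsto_atTop_add_const_right _ 2 tendsto_natCast_atTop_atTop
  set γn : ℕ → Euc d := fun n => ft A (a + tn n • v) with hγn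
  set wn : ℕ → Euc d := fun n => ((n : ℝ) + 2) • (γn n - a) with hwn
  have hct : ∀ n : ℕ, ((n : ℝ) + 2) * tn n = 1 := fun n => by
    rw [htn]; field_simp
  have hdya : ∀ n, dist (a + tn n • v) a = tn n * ‖v‖ := by
    intro n
    rw [dist_eq_norm, add_sub_cancel_left, norm_smul, Real.norm_eq_abs,
      abs_of_pos (htnpos n)]
  have hinfle : ∀ n, infDist (a + tn n • v) A ≤ tn n * ‖v‖ := by
    intro n
    rw [← hdya n]
    exact Metric.infDist_le_dist_of_mem ha
  have hunp : ∀ n, (a + tn n • v) ∈ unp A := by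
    intro n
    apply hU
    have h1 := hinfle n
    have h2 := htn12 n
    nlinarith [htnpos n, hv0]
  have hwnv : ∀ n, ‖wn n - v‖ ≤ ‖v‖ ^ 2 * (1 + 4 * tn n) / (2 * T) := by
    intro n
    have hkey : wn n - v = ((n : ℝ) + 2) • (γn n - (a + tn n • v)) := by
      have h1 : ((n : ℝ) + 2) • (tn n • v) = v := by rw [smul_smul, hct, one_smul]
      rw [show γn n - (a + tn n • v) = (γn n - a) - tn n • v by abel, smul_sub, h1, hwn]
    rw [hkey, norm_smul, Real.norm_eq_abs, abs_of_pos (by positivity)]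
    have hfd : ‖γn n - (a + tn n • v)‖ = infDist (a + tn n • v) A := by
      rw [← dist_eq_norm, dist_comm]
      exact ft_dist (hunp n)
    rw [hfd]
    have hb := bound (tn n) (htnpos n) (htn12 n)
    calc ((n:ℝ) + 2) * infDist (a + tn n • v) A
        ≤ ((n:ℝ) + 2) * (tn n * (‖v‖ ^ 2 * (1 + 4 * tn n) / (2 * T))) :=
          mul_le_mul_of_nonneg_left hb (by positivity)
      _ = ‖v‖ ^ 2 * (1 + 4 * tn n) / (2 * T) := by rw [← mul_assoc, hct, one_mul]
  -- threshold index
  have hlimb : Filter.Tendsto (fun n => ‖v‖ ^ 2 * (1 + 4 * tn n) / (2 * T)) atTop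
      (nhds (‖v‖ ^ 2 / (2 * T))) := by
    have h1 : Filter.Tendsto (fun n => 1 + 4 * tn n) atTop (nhds (1 + 4 * 0)) :=
      (tendsto_const_nhds (x := (1:ℝ)) (f := atTop (α := ℕ))).add (htn0.const_mul 4)
    rw [show (1:ℝ) + 4 * 0 = 1 by norm_num] at h1
    have h3 := (h1.const_mul (‖v‖ ^ 2)).div_const (2 * T)
    rw [show ‖v‖ ^ 2 * 1 / (2 * T) = ‖v‖ ^ 2 / (2 * T) by ring] at h3
    exact h3
  have hδv : ‖v‖ ^ 2 / (2 * T) < ‖v‖ := by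
    rw [div_lt_iff₀ (by positivity)]
    nlinarith
  have hev : ∀ᶠ n in atTop, ‖v‖ ^ 2 * (1 + 4 * tn n) / (2 * T) < ‖v‖ :=
    hlimb.eventually_lt_const hδv
  obtain ⟨N, hN⟩ := Filter.eventually_atTop.mp hev
  have hne : ∀ m, N ≤ m → γn m ≠ a := by
    intro m hm hcon
    have h1 := hwnv m
    have h2 : wn m = 0 := by
      show ((m : ℝ) + 2) • (γn m - a) = 0
      rw [hcon, sub_self, smul_zero]
    rw [h2, zero_sub, norm_neg] at h1
    exact absurd (lt_of_le_of_lt h1 (hN m hm)) (lt_irrefl _)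
  -- extraction
  have hWb : ∀ n : ℕ, wn (n + N) ∈ Metric.closedBall (0 : Euc d) (2 * ‖v‖) := by
    intro n
    rw [Metric.mem_closedBall, dist_zero_right]
    have h1 := hwnv (n + N)
    have h2 := hN (n + N) (Nat.le_add_left N n)
    calc ‖wn (n + N)‖ = ‖(wn (n + N) - v) + v‖ := by rw [sub_add_cancel]
      _ ≤ ‖wn (n + N) - v‖ + ‖v‖ := norm_add_le _ _
      _ ≤ 2 * ‖v‖ := by linarith [lt_of_le_of_lt h1 h2]
  obtain ⟨w, hwmem, φ, hφ, hconv⟩ :=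
    (isCompact_closedBall (0 : Euc d) (2 * ‖v‖)).tendsto_subseq hWb
  have hφN : Filter.Tendsto (fun n => φ n + N) atTop atTop :=
    Filter.tendsto_atTop_mono (fun n => Nat.le_add_right (φ n) N) hφ.tendsto_atTop
  refine ⟨w, ?_, ?_⟩
  · right
    refine ⟨fun n => γn (φ n + N), fun n => ((φ n + N : ℕ) : ℝ) + 2, ?_, ?_, ?_, ?_⟩
    · exact fun n => ⟨ft_mem (hunp _), hne _ (Nat.le_add_left N (φ n))⟩
    · rw [tendsto_iff_dist_tendsto_zero]
      have hda : ∀ m, dist (γn m) a ≤ 2 * (tn m * ‖v‖) := by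
        intro m
        calc dist (γn m) a ≤ dist (γn m) (a + tn m • v) + dist (a + tn m • v) a :=
            dist_triangle _ _ _
          _ ≤ tn m * ‖v‖ + tn m * ‖v‖ := by
              have h1 : dist (γn m) (a + tn m • v) = infDist (a + tn m • v) A := by
                rw [dist_comm]; exact ft_dist (hunp m)
              rw [h1, hdya m]
              exact add_le_add (hinfle m) le_rfl
          _ = 2 * (tn m * ‖v‖) := by ring
      apply squeeze_zero (fun n => dist_nonneg) (fun n => hda (φ n + N))
      have h1 : Filter.Tendsto (fun n => 2 * (tn (φ n + N) * ‖v‖)) atTop (nhds (2 * (0 * ‖v‖))) :=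
        (((htn0.comp hφN).mul_const ‖v‖).const_mul 2)
      simpa using h1
    · intro n; positivity
    · exact hconv
  · have hlhs : Filter.Tendsto (fun n => ‖wn (φ n + N) - v‖) atTop (nhds ‖w - v‖) :=
      (hconv.sub tendsto_const_nhds).norm
    have hrhs : Filter.Tendsto (fun n => ‖v‖ ^ 2 * (1 + 4 * tn (φ n + N)) / (2 * T)) atTop
        (nhds (‖v‖ ^ 2 / (2 * T))) := hlimb.comp hφN
    have hle := le_of_tendsto_of_tendsto' hlhs hrhs (fun n => hwnv (φ n + N))
    have h2T : 2 * T = ‖v‖ + r := by rw [hT]; ring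
    rw [h2T] at hle
    rwa [norm_sub_rev] at hle

lemma tanCone_smul_mem {a u : Euc d} (hu : u ∈ tanCone A a) {c : ℝ} (hc : 0 < c) :
    c • u ∈ tanCone A a := by
  rcases hu with h | ⟨x, ρ, h1, h2, h3, h4⟩
  · left; rw [h, smul_zero]
  · right
    refine ⟨x, fun n => c * ρ n, h1, h2, fun n => mul_pos hc (h3 n), ?_⟩
    have h5 := h4.const_smul c
    simpa [smul_smul] using h5

end FedererAux

set_option maxHeartbeats 1000000 in
theorem stmt5 {d : ℕ} (A : Set (Euc d)) (r : ℝ) (hr : 0 < r)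
    (hrA : ENNReal.ofReal r < reach A) (a b : Euc d) (ha : a ∈ A) (hb : b ∈ A)
    (hab : b ≠ a) (hlt : ‖b - a‖ < r)
    (hdim : Module.finrank ℝ (Submodule.span ℝ (tanCone A a)) = 1) :
    ((Submodule.orthogonalProjectionOnto (Submodule.span ℝ (tanCone A a)) (b - a) : Euc d) ∈ tanCone A a) ∧
    Real.sqrt 3 / 2 * ‖b - a‖ ≤
      ‖(Submodule.orthogonalProjectionOnto (Submodule.span ℝ (tanCone A a)) (b - a) : Euc d)‖ ∧
    Real.sqrt 3 *
        ‖(b - a) - (Submodule.orthogonalProjectionOnto (Submodule.span ℝ (tanCone A a)) (b - a) : Euc d)‖ ≤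
      ‖(Submodule.orthogonalProjectionOnto (Submodule.span ℝ (tanCone A a)) (b - a) : Euc d)‖ := by

  have hA : A.Nonempty := ⟨a, ha⟩
  have hU : ∀ y : Euc d, infDist y A < r → y ∈ unp A :=
    fun y hy => FedererAux.unp_of_reach hrA hA hy
  obtain ⟨w, hwT, hwb⟩ := FedererAux.chord_tangent hU hr ha hb hab hlt
  set v := b - a with hv
  set S := Submodule.span ℝ (tanCone A a) with hS
  set P : Euc d := (Submodule.orthogonalProjectionOnto S v : Euc d) with hP
  have hv0 : 0 < ‖v‖ := norm_pos_iff.mpr (sub_ne_zero.mpr hab)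
  set δ₀ := ‖v‖ ^ 2 / (‖v‖ + r) with hδ₀
  have hδ0nn : 0 ≤ δ₀ := by positivity
  have hδ : δ₀ < ‖v‖ / 2 := by
    rw [hδ₀, div_lt_div_iff₀ (by positivity) (by norm_num)]
    nlinarith
  have hδv : δ₀ < ‖v‖ := lt_trans hδ (by linarith)
  have hPS : P ∈ S := by rw [hP]; exact SetLike.coe_mem _
  have hwS : w ∈ S := Submodule.subset_span hwT
  have hperp : ∀ s ∈ S, ⟪v - P, s⟫ = 0 := by
    intro s hs
    have h1 := Submodule.sub_starProjection_mem_orthogonal (K := S) v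
    have h2 := (Submodule.mem_orthogonal S (v - P)).mp h1 s hs
    rw [real_inner_comm]
    exact h2
  clear_value P
  have hPw : ‖v - P‖ ≤ ‖v - w‖ := by
    have h2 : v - w = (v - P) + (P - w) := by abel
    have h1 : ‖v - w‖ ^ 2 = ‖v - P‖ ^ 2 + ‖P - w‖ ^ 2 := by
      rw [h2, norm_add_sq_real, hperp (P - w) (Submodule.sub_mem S hPS hwS)]
      ring
    nlinarith [norm_nonneg (v - w), norm_nonneg (v - P), sq_nonneg ‖P - w‖]
  have hD : ‖v - P‖ ≤ ‖v‖ / 2 := le_trans hPw (le_trans hwb hδ.le)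
  have hpyth : ‖v‖ ^ 2 = ‖v - P‖ ^ 2 + ‖P‖ ^ 2 := by
    have h2 : v = (v - P) + P := by abel
    conv_lhs => rw [h2]
    rw [norm_add_sq_real, hperp P hPS]
    ring
  have hsqrt3 : Real.sqrt 3 ^ 2 = 3 := Real.sq_sqrt (by norm_num)
  refine ⟨?_, ?_, ?_⟩
  · -- membership
    have hw0 : w ≠ 0 := by
      intro h
      rw [h, sub_zero] at hwb
      exact absurd (lt_of_le_of_lt hwb hδv) (lt_irrefl _)
    have hspan : Submodule.span ℝ ({w} : Set (Euc d)) = S := by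
      apply Submodule.eq_of_le_of_finrank_le
      · exact Submodule.span_le.mpr (Set.singleton_subset_iff.mpr hwS)
      · rw [finrank_span_singleton hw0, ← hS] at *
        exact le_of_eq hdim
    have hPmem : P ∈ Submodule.span ℝ ({w} : Set (Euc d)) := by rw [hspan]; exact hPS
    obtain ⟨c, hc⟩ := Submodule.mem_span_singleton.mp hPmem
    have hvw : 0 < ⟪v, w⟫ := by
      have h1 : ‖v - w‖ ^ 2 = ‖v‖ ^ 2 - 2 * ⟪v, w⟫ + ‖w‖ ^ 2 := norm_sub_sq_real v w
      have h2 : ‖v - w‖ ^ 2 ≤ δ₀ ^ 2 := pow_le_pow_left₀ (norm_nonneg _) hwb 2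
      nlinarith [sq_nonneg ‖w‖, hδv, hδ0nn]
    have hPw2 : ⟪P, w⟫ = ⟪v, w⟫ := by
      have h1 := hperp w hwS
      rw [inner_sub_left] at h1
      linarith
    have hcpos : 0 < c := by
      have h1 : ⟪P, w⟫ = c * ‖w‖ ^ 2 := by
        rw [← hc, real_inner_smul_left, real_inner_self_eq_norm_sq]
      by_contra hle
      push_neg at hle
      nlinarith [norm_pos_iff.mpr hw0, sq_nonneg ‖w‖]
    rw [← hc]
    exact FedererAux.tanCone_smul_mem hwT hcpos
  · have h1 : (3 / 4) * ‖v‖ ^ 2 ≤ ‖P‖ ^ 2 := by nlinarith [hpyth, hD, hv0, norm_nonneg (v - P)]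
    have key : (Real.sqrt 3 / 2 * ‖v‖) ^ 2 ≤ ‖P‖ ^ 2 := by
      rw [mul_pow, div_pow, hsqrt3]
      nlinarith [h1]
    calc Real.sqrt 3 / 2 * ‖v‖ = Real.sqrt ((Real.sqrt 3 / 2 * ‖v‖) ^ 2) :=
        (Real.sqrt_sq (by positivity)).symm
      _ ≤ Real.sqrt (‖P‖ ^ 2) := Real.sqrt_le_sqrt key
      _ = ‖P‖ := Real.sqrt_sq (norm_nonneg P)
  · have h1 : 3 * ‖v - P‖ ^ 2 ≤ ‖P‖ ^ 2 := by nlinarith [hpyth, hD, hv0, norm_nonneg (v - P)]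
    have key : (Real.sqrt 3 * ‖v - P‖) ^ 2 ≤ ‖P‖ ^ 2 := by
      rw [mul_pow, hsqrt3]
      exact h1
    calc Real.sqrt 3 * ‖v - P‖ = Real.sqrt ((Real.sqrt 3 * ‖v - P‖) ^ 2) :=
        (Real.sqrt_sq (by positivity)).symm
      _ ≤ Real.sqrt (‖P‖ ^ 2) := Real.sqrt_le_sqrt key
      _ = ‖P‖ := Real.sqrt_sq (norm_nonneg P)
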